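/- arXiv:0801.2996 — 2 statements merged into one kernel-verified Lean document; each statement's English description precedes it below -/
import Mathlib

section
/- For every t with 0 < t < 1, the function f_t is an even function of y: f_t(−y) = f_t(y) for all real y. -/
open MeasureTheory Real Set

/-- Modified Bessel function of the third kind `K_w(a)` for `a > 0`:
`K_w(a) = ∫₀^∞ e^{−a·cosh u} · cosh(w·u) du`. -/
noncomputable def Kbes (a : ℝ) (w : ℂ) : ℂ :=
  ∫ u in Ioi (0:ℝ), Complex.exp (-(a:ℂ) * (Real.cosh u : ℂ)) * Complex.cosh (w * (u:ℂ))

/-- `K_{iz}(a) = ∫₀^∞ e^{−a·cosh u} · cos(z·u) du`. -/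
noncomputable def Kiz (a : ℝ) (z : ℂ) : ℂ :=
  ∫ u in Ioi (0:ℝ), Complex.exp (-(a:ℂ) * (Real.cosh u : ℂ)) * Complex.cos (z * (u:ℂ))

/-- The real-valued function `K_{ix}(a)` for real `x`. -/
noncomputable def Kre (a x : ℝ) : ℝ :=
  ∫ u in Ioi (0:ℝ), Real.exp (-a * Real.cosh u) * Real.cos (x * u)

/-- The series `∑_{k=0}^∞ ((y+1)_k)² (1−t)^k / (k!·(k+1)!) = ₂F₁(y+1,y+1;2;1−t)`. -/
noncomputable def Sgauss (y t : ℝ) : ℝ :=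
  ∑' k : ℕ, ((ascPochhammer ℝ k).eval (y + 1))^2 * (1 - t)^k /
    ((k.factorial : ℝ) * ((k+1).factorial : ℝ))

/-- `f_t(y) = y² · t^y · ₂F₁(y+1, y+1; 2; 1−t)`. -/
noncomputable def fPol (t y : ℝ) : ℝ := y^2 * t ^ y * Sgauss y t

/-- `F_{a,c}(z) = K_{i(z−ic)}(a) + K_{i(z+ic)}(a)`. -/
noncomputable def Fac (a c : ℝ) (z : ℂ) : ℂ :=
  Kbes a (Complex.I * (z - Complex.I * (c:ℂ))) + Kbes a (Complex.I * (z + Complex.I * (c:ℂ)))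

/-- Pólya's function `Ξ*(z) = 16π² ∫₀^∞ cosh(9u/2) e^{−2π cosh 2u} cos(zu) du`. -/
noncomputable def XiStar (z : ℂ) : ℂ :=
  16 * (Real.pi : ℂ)^2 * ∫ u in Ioi (0:ℝ),
    ((Real.cosh (9*u/2) * Real.exp (-(2*Real.pi) * Real.cosh (2*u)) : ℝ) : ℂ) *
      Complex.cos (z * (u:ℂ))

/-- `S(α, β; w) = ∑_{k=0}^∞ (α)_k (β)_k w^k / (k!·(k+1)!) = ₂F₁(α, β; 2; w)`. -/
noncomputable def S2gauss (α β w : ℝ) : ℝ :=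
  ∑' k : ℕ, (ascPochhammer ℝ k).eval α * (ascPochhammer ℝ k).eval β * w^k /
    ((k.factorial : ℝ) * ((k+1).factorial : ℝ))

/-- `g_{t,c}(y)`. -/
noncomputable def gPol (t c y : ℝ) : ℝ :=
  y*(y+2*c) * t ^ (y+c) * S2gauss (y+1) (y+2*c+1) (1-t)
  + y*(y-2*c) * t ^ (y-c) * S2gauss (y+1) (y-2*c+1) (1-t)
  - 2*y^2 * t ^ y * S2gauss (y+1) (y+1) (1-t)

section AuxEuler
open Filter Finset


noncomputable def poc (m : ℕ) (s : ℝ) : ℝ := (ascPochhammer ℝ m).eval s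
lemma poc_zero (s : ℝ) : poc 0 s = 1 := by simp [poc, ascPochhammer_zero]
lemma poc_succ (m : ℕ) (s : ℝ) : poc (m+1) s = poc m s * (s + m) := by
  simp [poc, ascPochhammer_succ_eval]
lemma poc_pos {c : ℝ} (hc : 0 < c) (m : ℕ) : 0 < poc m c := ascPochhammer_pos m c hc
lemma tendsto_ratio (a b : ℝ) :
    Tendsto (fun n : ℕ => ((n:ℝ) + a)/((n:ℝ) + b)) atTop (nhds 1) := by
  have hb : Tendsto (fun n : ℕ => (n:ℝ) + b) atTop atTop :=
    tendsto_atTop_add_const_right atTop b tendsto_natCast_atTop_atTop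
  have h0 : Tendsto (fun n : ℕ => (a - b)/((n:ℝ) + b)) atTop (nhds 0) :=
    Tendsto.div_atTop tendsto_const_nhds hb
  have h1 : Tendsto (fun n : ℕ => 1 + (a - b)/((n:ℝ) + b)) atTop (nhds 1) := by
    simpa using tendsto_const_nhds.add h0
  refine h1.congr' ?_
  filter_upwards [hb.eventually_ne_atTop 0] with n hn
  field_simp
  ring

lemma fact_ne (m : ℕ) : ((m.factorial : ℝ)) ≠ 0 :=
  Nat.cast_ne_zero.mpr (Nat.factorial_ne_zero m)

lemma fact_pos (m : ℕ) : (0:ℝ) < (m.factorial : ℝ) := by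
  exact_mod_cast Nat.factorial_pos m

lemma sumA (c : ℝ) (hc : 0 < c) {x : ℝ} (h0 : 0 < x) (h1 : x < 1) :
    Summable fun m : ℕ => poc m c / m.factorial * x ^ m := by
  set f : ℕ → ℝ := fun m => poc m c / m.factorial * x ^ m with hf
  have hpos : ∀ m, 0 < f m := fun m => by
    have := poc_pos hc m; have := fact_pos m; positivity
  refine summable_of_ratio_test_tendsto_lt_one h1
    (Eventually.of_forall fun m => (hpos m).ne') ?_
  have heq : (fun m : ℕ => ‖f (m+1)‖ / ‖f m‖)
      = fun m : ℕ => x * (((m:ℝ) + c)/((m:ℝ) + 1)) := by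
    funext m
    rw [Real.norm_of_nonneg (hpos _).le, Real.norm_of_nonneg (hpos _).le, hf]
    simp only [poc_succ, Nat.factorial_succ, Nat.cast_mul, pow_succ]
    have h2 := (poc_pos hc m).ne'
    have h3 := fact_ne m
    have h4 : ((m:ℝ) + 1) ≠ 0 := by positivity
    have h5 : x ^ m ≠ 0 := (pow_pos h0 m).ne'
    field_simp
    push_cast
    ring
  rw [heq]
  simpa using (tendsto_ratio c 1).const_mul x

lemma sumC (c : ℝ) (hc : 0 < c) {x : ℝ} (h0 : 0 < x) (h1 : x < 1) :
    Summable fun m : ℕ => poc (m+1) c / m.factorial * x ^ m := by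
  set f : ℕ → ℝ := fun m => poc (m+1) c / m.factorial * x ^ m with hf
  have hpos : ∀ m, 0 < f m := fun m => by
    have := poc_pos hc (m+1); have := fact_pos m; positivity
  refine summable_of_ratio_test_tendsto_lt_one h1
    (Eventually.of_forall fun m => (hpos m).ne') ?_
  have heq : (fun m : ℕ => ‖f (m+1)‖ / ‖f m‖)
      = fun m : ℕ => x * (((m:ℝ) + (c+1))/((m:ℝ) + 1)) := by
    funext m
    rw [Real.norm_of_nonneg (hpos _).le, Real.norm_of_nonneg (hpos _).le, hf]
    simp only [poc_succ, Nat.factorial_succ, Nat.cast_mul, pow_succ]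
    have h2 := (poc_pos hc (m+1)).ne'
    rw [poc_succ] at h2
    have h3 := fact_ne m
    have h4 : ((m:ℝ) + 1) ≠ 0 := by positivity
    have h5 : x ^ m ≠ 0 := (pow_pos h0 m).ne'
    have h6 : (↑(m+1) : ℝ) = (m:ℝ) + 1 := by push_cast; ring
    have h2' := (poc_pos hc m).ne'
    field_simp
    push_cast
    ring
  rw [heq]
  simpa using (tendsto_ratio (c+1) 1).const_mul x

lemma sumB (c : ℝ) (hc : 0 < c) {x : ℝ} (h0 : 0 < x) (h1 : x < 1) :
    Summable fun m : ℕ => (poc m c)^2 / (m.factorial * (m+1).factorial) * x ^ m := by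
  set f : ℕ → ℝ := fun m => (poc m c)^2 / (m.factorial * (m+1).factorial) * x ^ m with hf
  have hpos : ∀ m, 0 < f m := fun m => by
    have := poc_pos hc m; have := fact_pos m; have := fact_pos (m+1); positivity
  refine summable_of_ratio_test_tendsto_lt_one h1
    (Eventually.of_forall fun m => (hpos m).ne') ?_
  have heq : (fun m : ℕ => ‖f (m+1)‖ / ‖f m‖)
      = fun m : ℕ => x * ((((m:ℝ) + c)/((m:ℝ) + 1)) * (((m:ℝ) + c)/((m:ℝ) + 2))) := by
    funext m
    rw [Real.norm_of_nonneg (hpos _).le, Real.norm_of_nonneg (hpos _).le, hf]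
    simp only [poc_succ, pow_succ]
    have h2 := (poc_pos hc m).ne'
    have h3 := fact_ne m
    have h3' := fact_ne (m+1)
    have h4 : ((m:ℝ) + 1) ≠ 0 := by positivity
    have h4' : ((m:ℝ) + 2) ≠ 0 := by positivity
    have h5 : x ^ m ≠ 0 := (pow_pos h0 m).ne'
    have h6 : ((m+1+1).factorial : ℝ) = ((m:ℝ)+2) * (m+1).factorial := by
      rw [Nat.factorial_succ]; push_cast; ring
    have h7 : ((m+1).factorial : ℝ) = ((m:ℝ)+1) * m.factorial := by
      rw [Nat.factorial_succ]; push_cast; ring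
    rw [h6, h7]
    field_simp
    ring
  rw [heq]
  have := ((tendsto_ratio c 1).mul (tendsto_ratio c 2)).const_mul x
  simpa using this

lemma abs_poc_le (s : ℝ) (m : ℕ) : |poc m s| ≤ poc m (|s| + 1) := by
  induction m with
  | zero => simp [poc_zero]
  | succ n ih =>
    rw [poc_succ, poc_succ, abs_mul]
    have h1 : |s + n| ≤ |s| + 1 + n := by
      refine (abs_add_le _ _).trans ?_
      rw [Nat.abs_cast]
      linarith
    have h2 : (0:ℝ) ≤ |s| + 1 + n := by positivity
    exact mul_le_mul ih h1 (abs_nonneg _) (poc_pos (by positivity) n).le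

-- ODE lemma: (1 - z) * D = s * S
lemma ode_step (s z : ℝ)
    (h1 : Summable fun m : ℕ => poc m s / m.factorial * ((m:ℝ) * z ^ (m-1))) :
    (1 - z) * ∑' m : ℕ, poc m s / m.factorial * ((m:ℝ) * z ^ (m-1))
      = s * ∑' m : ℕ, poc m s / m.factorial * z ^ m := by
  have hshift : (fun m : ℕ => poc (m+1) s / (m+1).factorial * (((m+1:ℕ):ℝ) * z ^ (m+1-1)))
      = fun m : ℕ => poc (m+1) s / m.factorial * z ^ m := by
    funext m
    have h7 : ((m+1).factorial : ℝ) = ((m:ℝ)+1) * m.factorial := by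
      rw [Nat.factorial_succ]; push_cast; ring
    have h3 := fact_ne m
    have h4 : ((m:ℝ) + 1) ≠ 0 := by positivity
    simp only [Nat.add_sub_cancel, h7]
    push_cast
    field_simp
  have hs1 : Summable fun m : ℕ => poc (m+1) s / m.factorial * z ^ m := by
    rw [← hshift]
    exact (summable_nat_add_iff 1).mpr h1
  have hsz : Summable fun m : ℕ => poc m s / m.factorial * ((m:ℝ) * z ^ m) := by
    have := h1.mul_left z
    refine this.congr fun m => ?_
    cases m with
    | zero => simp
    | succ k => simp only [Nat.add_sub_cancel, pow_succ]; push_cast; ring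
  have hD : ∑' m : ℕ, poc m s / m.factorial * ((m:ℝ) * z ^ (m-1))
      = ∑' m : ℕ, poc (m+1) s / m.factorial * z ^ m := by
    rw [Summable.tsum_eq_zero_add h1]
    simp only [Nat.cast_zero, zero_mul, mul_zero, zero_add]
    exact tsum_congr fun m => congrFun hshift m
  have hzD : z * ∑' m : ℕ, poc m s / m.factorial * ((m:ℝ) * z ^ (m-1))
      = ∑' m : ℕ, poc m s / m.factorial * ((m:ℝ) * z ^ m) := by
    rw [← tsum_mul_left]
    refine tsum_congr fun m => ?_
    cases m with
    | zero => simp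
    | succ k => simp only [Nat.add_sub_cancel, pow_succ]; push_cast; ring
  have key : ∑' m : ℕ, poc (m+1) s / m.factorial * z ^ m
      - ∑' m : ℕ, poc m s / m.factorial * ((m:ℝ) * z ^ m)
      = s * ∑' m : ℕ, poc m s / m.factorial * z ^ m := by
    rw [← tsum_mul_left, ← (hs1.hasSum.sub hsz.hasSum).tsum_eq]
    refine tsum_congr fun m => ?_
    rw [poc_succ]
    ring
  rw [sub_mul, one_mul, hzD, hD, key]
lemma binom (s : ℝ) {x : ℝ} (hx0 : 0 ≤ x) (hx1 : x < 1) :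
    ∑' m : ℕ, poc m s / m.factorial * x ^ m = (1 - x) ^ (-s) := by
  rcases eq_or_lt_of_le hx0 with h | hx0'
  · rw [← h]
    rw [tsum_eq_single 0 (fun m hm => by
      rw [zero_pow hm, mul_zero])]
    simp [poc_zero]
  set r : ℝ := (1 + x)/2 with hr
  have hxr : x < r := by rw [hr]; linarith
  have hr0 : 0 < r := by rw [hr]; linarith
  have hr1 : r < 1 := by rw [hr]; linarith
  -- the bounding series for derivatives
  set u : ℕ → ℝ := fun m => poc (m+1) (|s|+1) / m.factorial * r ^ m with hu
  have husum : Summable (fun m : ℕ => (m:ℝ) * (poc m (|s|+1) / m.factorial * r ^ (m-1))) := by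
    rw [← summable_nat_add_iff 1]
    refine (sumC (|s|+1) (by positivity) hr0 hr1).congr fun m => ?_
    have h7 : ((m+1).factorial : ℝ) = ((m:ℝ)+1) * m.factorial := by
      rw [Nat.factorial_succ]; push_cast; ring
    simp only [Nat.add_sub_cancel, h7]
    have h3 := fact_ne m
    have h4 : ((m:ℝ) + 1) ≠ 0 := by positivity
    push_cast
    field_simp
  -- derivative bound for terms
  have hbound : ∀ (m : ℕ) (z : ℝ), z ∈ Set.Ioo (-r) r →
      ‖poc m s / m.factorial * ((m:ℝ) * z ^ (m-1))‖
        ≤ (m:ℝ) * (poc m (|s|+1) / m.factorial * r ^ (m-1)) := by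
    intro m z hz
    have hzr : |z| ≤ r := by
      rw [abs_le]; exact ⟨hz.1.le, hz.2.le⟩
    rw [norm_mul, norm_mul, norm_div]
    have h1 : ‖poc m s‖ ≤ poc m (|s|+1) := by
      rw [Real.norm_eq_abs]; exact abs_poc_le s m
    have h2 : ‖z ^ (m-1)‖ ≤ r ^ (m-1) := by
      rw [norm_pow, Real.norm_eq_abs]
      exact pow_le_pow_left₀ (abs_nonneg z) hzr _
    have h3 : ‖((m:ℕ):ℝ)‖ = (m:ℝ) := by
      rw [Real.norm_eq_abs, Nat.abs_cast]
    have h4 : ‖(m.factorial : ℝ)‖ = (m.factorial : ℝ) := by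
      rw [Real.norm_eq_abs, abs_of_pos (fact_pos m)]
    rw [h3, h4]
    have hfp := fact_pos m
    have hpocnn : (0:ℝ) ≤ poc m (|s|+1) := (poc_pos (by positivity) m).le
    calc ‖poc m s‖ / (m.factorial:ℝ) * ((m:ℝ) * ‖z ^ (m-1)‖)
        ≤ poc m (|s|+1) / (m.factorial:ℝ) * ((m:ℝ) * r ^ (m-1)) := by
          gcongr
      _ = (m:ℝ) * (poc m (|s|+1) / m.factorial * r ^ (m-1)) := by ring
  -- HasDerivAt of the sum
  have hasD : ∀ z ∈ Set.Ioo (-r) r,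
      HasDerivAt (fun w => ∑' m : ℕ, poc m s / m.factorial * w ^ m)
        (∑' m : ℕ, poc m s / m.factorial * ((m:ℝ) * z ^ (m-1))) z := by
    intro z hz
    refine hasDerivAt_tsum_of_isPreconnected (y₀ := 0) husum isOpen_Ioo
      (convex_Ioo _ _).isPreconnected
      (fun m w _ => (hasDerivAt_pow m w).const_mul (poc m s / m.factorial))
      hbound ?_ ?_ hz
    · exact Set.mem_Ioo.mpr ⟨by linarith, hr0⟩
    · refine summable_of_ne_finset_zero (s := {0}) fun m hm => ?_
      have hm0 : m ≠ 0 := by simpa using hm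
      rw [zero_pow hm0, mul_zero]
  -- summability of derivative terms at any z in Ioo
  have hsum1 : ∀ z ∈ Set.Ioo (-r) r,
      Summable fun m : ℕ => poc m s / m.factorial * ((m:ℝ) * z ^ (m-1)) :=
    fun z hz => Summable.of_norm_bounded husum (fun m => hbound m z hz)
  -- the function g with zero derivative
  have hgderiv : ∀ z ∈ Set.Ioo (-r) r,
      HasDerivAt (fun w => (∑' m : ℕ, poc m s / m.factorial * w ^ m) * (1 - w) ^ s) 0 z := by
    intro z hz
    have h1z : (0:ℝ) < 1 - z := by
      have := hz.1
      have := hz.2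
      linarith
    have hrpow : HasDerivAt (fun w : ℝ => (1 - w) ^ s)
        ((s * (1 - z) ^ (s - 1)) * (-1)) z := by
      have houter := Real.hasDerivAt_rpow_const (x := 1 - z) (p := s) (Or.inl h1z.ne')
      have hinner : HasDerivAt (fun w : ℝ => 1 - w) (-1) z := by
        simpa using (hasDerivAt_id z).const_sub 1
      exact houter.comp z hinner
    have hmul := (hasD z hz).mul hrpow
    have key := ode_step s z (hsum1 z hz)
    have hpowsplit : (1 - z) ^ s = (1 - z) ^ (s - 1) * (1 - z) := by
      calc (1 - z) ^ s = (1 - z) ^ ((s-1)+1) := by norm_num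
        _ = (1-z)^(s-1) * (1-z)^(1:ℝ) := Real.rpow_add h1z _ _
        _ = (1-z)^(s-1) * (1-z) := by rw [Real.rpow_one]
    refine hmul.congr_deriv ?_
    symm
    rw [hpowsplit]
    linear_combination (-(1 - z) ^ (s - 1)) * key
  -- constancy on [0, x]
  have hIccsub : Set.Icc (0:ℝ) x ⊆ Set.Ioo (-r) r := fun w hw =>
    ⟨by linarith [hw.1], by linarith [hw.2]⟩
  have hconst := constant_of_has_deriv_right_zero
    (f := fun w => (∑' m : ℕ, poc m s / m.factorial * w ^ m) * (1 - w) ^ s)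
    (a := 0) (b := x)
    (fun w hw => ((hgderiv w (hIccsub hw)).continuousAt).continuousWithinAt)
    (fun w hw => ((hgderiv w (hIccsub ⟨hw.1, hw.2.le⟩)).hasDerivWithinAt))
  have hx_mem : x ∈ Set.Icc (0:ℝ) x := Set.right_mem_Icc.mpr hx0
  have h0val : (∑' m : ℕ, poc m s / m.factorial * (0:ℝ) ^ m) * (1 - (0:ℝ)) ^ s = 1 := by
    rw [tsum_eq_single 0 (fun m hm => by rw [zero_pow hm, mul_zero])]
    simp [poc_zero]
  have this : (∑' m : ℕ, poc m s / m.factorial * x ^ m) * (1 - x) ^ s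
      = (∑' m : ℕ, poc m s / m.factorial * (0:ℝ) ^ m) * (1 - (0:ℝ)) ^ s := hconst x hx_mem
  rw [h0val] at this
  -- this : S x * (1-x)^s = 1
  have h1x : (0:ℝ) < 1 - x := by linarith
  have hne : (1 - x) ^ s ≠ 0 := (Real.rpow_pos_of_pos h1x s).ne'
  rw [Real.rpow_neg h1x.le]
  field_simp at this ⊢
  linarith [this]
noncomputable def pE (y : ℝ) (m : ℕ) : ℝ := poc m (2*y) / m.factorial
noncomputable def pA (y : ℝ) (j : ℕ) : ℝ := (poc j (-y+1))^2 / (j.factorial * (j+1).factorial)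
noncomputable def pB (y : ℝ) (k : ℕ) : ℝ := (poc k (y+1))^2 / (k.factorial * (k+1).factorial)

lemma cert (y : ℝ) (j d : ℕ) :
    ((j:ℝ)+(d:ℝ)+1)*((j:ℝ)+(d:ℝ)+2) * (pE y (d+1) * pA y j)
      - (y+((j:ℝ)+(d:ℝ))+1)^2 * (pE y d * pA y j)
    = (j:ℝ)*((j:ℝ)+1)*(pE y (d+1) * pA y j)
      - ((j:ℝ)+1)*((j:ℝ)+2) * (pE y d * pA y (j+1)) := by
  unfold pE pA
  rw [poc_succ d (2*y), poc_succ j (-y+1)]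
  have hfd := fact_ne d
  have hfj := fact_ne j
  have hfj1 := fact_ne (j+1)
  have hd1 : ((d+1).factorial : ℝ) = ((d:ℝ)+1) * d.factorial := by
    rw [Nat.factorial_succ]; push_cast; ring
  have hj2 : ((j+1+1).factorial : ℝ) = ((j:ℝ)+2) * (j+1).factorial := by
    rw [Nat.factorial_succ]; push_cast; ring
  have hj1 : ((j+1).factorial : ℝ) = ((j:ℝ)+1) * j.factorial := by
    rw [Nat.factorial_succ]; push_cast; ring
  have h4 : ((d:ℝ)+1) ≠ 0 := by positivity
  have h5 : ((j:ℝ)+1) ≠ 0 := by positivity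
  have h6 : ((j:ℝ)+2) ≠ 0 := by positivity
  rw [hd1, hj2, hj1]
  field_simp
  ring

noncomputable def pT (y : ℝ) (k : ℕ) : ℝ :=
  ∑ j ∈ Finset.range (k+1), pE y (k - j) * pA y j

lemma pT_rec (y : ℝ) (k : ℕ) :
    ((k:ℝ)+1)*((k:ℝ)+2) * pT y (k+1) = (y+(k:ℝ)+1)^2 * pT y k := by
  classical
  set u : ℕ → ℝ := fun j => (j:ℝ)*((j:ℝ)+1) * (pE y (k+1-j) * pA y j) with hu
  have hterm : ∀ j ∈ Finset.range (k+1),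
      ((k:ℝ)+1)*((k:ℝ)+2) * (pE y (k+1-j) * pA y j)
        - (y+(k:ℝ)+1)^2 * (pE y (k-j) * pA y j) = u j - u (j+1) := by
    intro j hj
    have hjk : j ≤ k := Nat.lt_succ_iff.mp (Finset.mem_range.mp hj)
    obtain ⟨d, rfl⟩ : ∃ d, k = j + d := ⟨k - j, by omega⟩
    have e1 : j + d + 1 - j = d + 1 := by omega
    have e2 : j + d - j = d := by omega
    have e3 : j + d + 1 - (j + 1) = d := by omega
    rw [hu]
    simp only [e1, e2, e3]
    have hc := cert y j d
    push_cast
    push_cast at hc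
    linear_combination hc
  have htel : ∑ j ∈ Finset.range (k+1), (u j - u (j+1)) = u 0 - u (k+1) :=
    Finset.sum_range_sub' u (k+1)
  have hsum := (Finset.sum_congr rfl hterm).trans htel
  rw [Finset.sum_sub_distrib] at hsum
  rw [← Finset.mul_sum, ← Finset.mul_sum] at hsum
  have hu0 : u 0 = 0 := by simp [hu]
  have huk : u (k+1) = ((k:ℝ)+1)*((k:ℝ)+2) * (pE y 0 * pA y (k+1)) := by
    rw [hu]; simp only [Nat.sub_self]; push_cast; ring
  have hsplit : pT y (k+1)
      = (∑ j ∈ Finset.range (k+1), pE y (k+1-j) * pA y j) + pE y 0 * pA y (k+1) := by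
    unfold pT
    rw [Finset.sum_range_succ, Nat.sub_self]
  rw [hu0, huk] at hsum
  rw [hsplit, show pT y k = ∑ j ∈ Finset.range (k+1), pE y (k-j) * pA y j from rfl]
  linear_combination hsum

lemma pT_eq_pB (y : ℝ) (k : ℕ) : pT y k = pB y k := by
  induction k with
  | zero =>
    simp [pT, pB, pE, pA, poc_zero]
  | succ k ih =>
    have hrec := pT_rec y k
    rw [ih] at hrec
    have hkk : (((k:ℝ)+1)*((k:ℝ)+2)) ≠ 0 := by positivity
    have hB : (y+(k:ℝ)+1)^2 * pB y k = ((k:ℝ)+1)*((k:ℝ)+2) * pB y (k+1) := by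
      unfold pB
      rw [poc_succ k (y+1)]
      have h1 := fact_ne k
      have h2 := fact_ne (k+1)
      have hk1 : ((k+1).factorial : ℝ) = ((k:ℝ)+1) * k.factorial := by
        rw [Nat.factorial_succ]; push_cast; ring
      have hk2 : ((k+1+1).factorial : ℝ) = ((k:ℝ)+2) * (k+1).factorial := by
        rw [Nat.factorial_succ]; push_cast; ring
      rw [hk2, hk1]
      field_simp
      ring
    rw [hB] at hrec
    exact mul_left_cancel₀ hkk hrec


lemma sgauss_euler (y t : ℝ) (ht : 0 < t) (ht1 : t < 1) :
    Sgauss y t = t ^ (-(2*y)) * Sgauss (-y) t := by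
  set x : ℝ := 1 - t with hxdef
  have hx0 : 0 < x := by rw [hxdef]; linarith
  have hx1 : x < 1 := by rw [hxdef]; linarith
  -- summability of norms
  have hWE : Summable fun m : ℕ => ‖pE y m * x ^ m‖ := by
    refine Summable.of_nonneg_of_le (fun m => norm_nonneg _) (fun m => ?_)
      (sumA (|2*y|+1) (by positivity) hx0 hx1)
    show ‖poc m (2*y) / m.factorial * x ^ m‖ ≤ _
    rw [norm_mul, norm_div, Real.norm_eq_abs, Real.norm_eq_abs, Real.norm_eq_abs,
      abs_of_pos (fact_pos m), abs_pow, abs_of_pos hx0]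
    gcongr
    exact abs_poc_le _ m
  have hWA : Summable fun j : ℕ => ‖pA y j * x ^ j‖ := by
    refine Summable.of_nonneg_of_le (fun m => norm_nonneg _) (fun j => ?_)
      (sumB (|-y+1|+1) (by positivity) hx0 hx1)
    show ‖(poc j (-y+1))^2 / (j.factorial * (j+1).factorial) * x ^ j‖ ≤ _
    rw [norm_mul, Real.norm_eq_abs, Real.norm_eq_abs, abs_pow, abs_of_pos hx0, abs_div,
      abs_of_pos (by positivity : (0:ℝ) < (j.factorial : ℝ) * ((j+1).factorial : ℝ)), abs_pow]
    gcongr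
    exact abs_poc_le _ j
  -- Cauchy product
  have cauchy := tsum_mul_tsum_eq_tsum_sum_antidiagonal_of_summable_norm hWE hWA
  -- identify the diagonal sums
  have hdiag : ∀ n : ℕ, (∑ kl ∈ Finset.HasAntidiagonal.antidiagonal n, (pE y kl.1 * x ^ kl.1) * (pA y kl.2 * x ^ kl.2))
      = pB y n * x ^ n := by
    intro n
    rw [Finset.Nat.sum_antidiagonal_eq_sum_range_succ
      (fun a b => (pE y a * x ^ a) * (pA y b * x ^ b)) n]
    have step1 : ∀ i ∈ Finset.range (n+1),
        (pE y i * x ^ i) * (pA y (n-i) * x ^ (n-i)) = (pE y i * pA y (n-i)) * x ^ n := by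
      intro i hi
      have hin : i + (n - i) = n := by
        have := Finset.mem_range.mp hi; omega
      calc (pE y i * x ^ i) * (pA y (n-i) * x ^ (n-i))
          = (pE y i * pA y (n-i)) * (x ^ i * x ^ (n-i)) := by ring
        _ = (pE y i * pA y (n-i)) * x ^ n := by rw [← pow_add, hin]
    rw [Finset.sum_congr rfl step1, ← Finset.sum_mul]
    have key : ∑ i ∈ Finset.range (n+1), pE y i * pA y (n-i) = pT y n := by
      unfold pT
      rw [← Finset.sum_range_reflect (fun j => pE y (n - j) * pA y j) (n+1)]
      refine Finset.sum_congr rfl fun j hj => ?_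
      have hj' : j < n + 1 := Finset.mem_range.mp hj
      have e1 : n + 1 - 1 - j = n - j := by omega
      have e2 : n - (n - j) = j := by omega
      simp only [e1, e2]
    rw [key, pT_eq_pB]
  -- binomial series
  have binomE : (∑' m : ℕ, pE y m * x ^ m) = t ^ (-(2*y)) := by
    have hb := binom (2*y) hx0.le hx1
    have hxt : (1:ℝ) - x = t := by rw [hxdef]; ring
    rw [hxt] at hb
    exact hb
  -- series identifications
  have hAe : (∑' j : ℕ, pA y j * x ^ j) = Sgauss (-y) t := by
    unfold Sgauss
    refine tsum_congr fun j => ?_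
    rw [← hxdef]
    show (poc j (-y+1))^2 / (j.factorial * (j+1).factorial) * x ^ j = _
    unfold poc
    ring
  have hBe : (∑' n : ℕ, pB y n * x ^ n) = Sgauss y t := by
    unfold Sgauss
    refine tsum_congr fun n => ?_
    rw [← hxdef]
    show (poc n (y+1))^2 / (n.factorial * (n+1).factorial) * x ^ n = _
    unfold poc
    ring
  calc Sgauss y t = ∑' n : ℕ, pB y n * x ^ n := hBe.symm
    _ = ∑' n : ℕ, ∑ kl ∈ Finset.HasAntidiagonal.antidiagonal n, (pE y kl.1 * x ^ kl.1) * (pA y kl.2 * x ^ kl.2) :=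
        (tsum_congr fun n => (hdiag n).symm)
    _ = (∑' m : ℕ, pE y m * x ^ m) * (∑' j : ℕ, pA y j * x ^ j) := cauchy.symm
    _ = t ^ (-(2*y)) * Sgauss (-y) t := by rw [binomE, hAe]


end AuxEuler

/-- `f_t` is an even function of `y`. -/
theorem fPol_even (t : ℝ) (ht : 0 < t) (ht1 : t < 1) (y : ℝ) :
    fPol t (-y) = fPol t y := by
  unfold fPol
  rw [sgauss_euler y t ht ht1, neg_sq]
  have hp : t ^ y * t ^ (-(2*y)) = t ^ (-y) := by
    rw [← Real.rpow_add ht]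
    congr 1
    ring
  linear_combination (-(y^2 * Sgauss (-y) t)) * hp
end

section
/- For every t with 0 < t < 1 and every real c, the function g_{t,c} is an even function of y: g_{t,c}(−y) = g_{t,c}(y) for all real y. -/
open MeasureTheory Real Set
open Filter Topology

noncomputable def ccp (a b : ℝ) (k : ℕ) : ℝ :=
  (ascPochhammer ℝ k).eval a * (ascPochhammer ℝ k).eval b /
    ((k.factorial : ℝ) * ((k+1).factorial : ℝ))

noncomputable def ddp (s : ℝ) (j : ℕ) : ℝ :=
  (ascPochhammer ℝ j).eval (-s) / (j.factorial : ℝ)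

lemma poch_succ (x : ℝ) (k : ℕ) :
    (ascPochhammer ℝ (k+1)).eval x = (ascPochhammer ℝ k).eval x * (x + k) := by
  rw [ascPochhammer_succ_right]
  simp [Polynomial.eval_mul]

lemma ccp_zero (a b : ℝ) : ccp a b 0 = 1 := by simp [ccp]

lemma ddp_zero (s : ℝ) : ddp s 0 = 1 := by simp [ddp]

lemma ccp_rec (a b : ℝ) (k : ℕ) :
    ((k:ℝ)+1) * ((k:ℝ)+2) * ccp a b (k+1) = ((k:ℝ)+a) * ((k:ℝ)+b) * ccp a b k := by
  have h1 : ((k.factorial : ℝ)) ≠ 0 := Nat.cast_ne_zero.2 k.factorial_ne_zero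
  have h2 : (((k+1).factorial : ℝ)) ≠ 0 := Nat.cast_ne_zero.2 (k+1).factorial_ne_zero
  simp only [ccp, poch_succ, Nat.factorial_succ]
  push_cast
  field_simp
  ring

lemma ddp_rec (s : ℝ) (j : ℕ) :
    ((j:ℝ)+1) * ddp s (j+1) = ((j:ℝ) - s) * ddp s j := by
  have h1 : ((j.factorial : ℝ)) ≠ 0 := Nat.cast_ne_zero.2 j.factorial_ne_zero
  simp only [ddp, poch_succ, Nat.factorial_succ]
  push_cast
  field_simp
  ring

noncomputable def Rr (a b : ℝ) (n : ℕ) : ℝ :=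
  ∑ k ∈ Finset.range (n+1), ccp a b k * ddp (a+b-2) (n-k)

lemma Rr_rec (a b : ℝ) (n : ℕ) :
    ((n:ℝ)+1) * ((n:ℝ)+2) * Rr a b (n+1) = ((n:ℝ)+2-a) * ((n:ℝ)+2-b) * Rr a b n := by
  set s : ℝ := a + b - 2 with hs
  have key : ∀ k ∈ Finset.range (n+1),
      (((n:ℝ)+1)*((n:ℝ)+2) - (k:ℝ)*((k:ℝ)+1)) * (ccp a b k * ddp s (n+1-k))
      = (((n:ℝ)+2-a)*((n:ℝ)+2-b) - ((k:ℝ)+a)*((k:ℝ)+b)) * (ccp a b k * ddp s (n-k)) := by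
    intro k hk
    rw [Finset.mem_range] at hk
    have hk' : k ≤ n := Nat.lt_succ_iff.1 hk
    have hsub : n + 1 - k = (n - k) + 1 := by omega
    have hcast : ((n - k : ℕ) : ℝ) = (n:ℝ) - (k:ℝ) := by
      push_cast [Nat.cast_sub hk']; ring
    have hd := ddp_rec s (n - k)
    rw [hcast] at hd
    rw [hsub]
    -- LHS factor: (n+1-k)(n+2+k); use hd : (n-k+1) * ddp s (n-k+1) = (n-k-s) * ddp s (n-k)
    have expand : (((n:ℝ)+1)*((n:ℝ)+2) - (k:ℝ)*((k:ℝ)+1)) * (ccp a b k * ddp s (n-k+1))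
        = ((n:ℝ)+2+(k:ℝ)) * ccp a b k * ((((n:ℝ)-(k:ℝ))+1) * ddp s (n-k+1)) := by ring
    rw [expand, hd]
    rw [hs]; ring
  -- main computation
  have expand2 : ((n:ℝ)+1) * ((n:ℝ)+2) * Rr a b (n+1)
      = (∑ k ∈ Finset.range (n+2), (k:ℝ)*((k:ℝ)+1) * (ccp a b k * ddp s (n+1-k)))
        + ∑ k ∈ Finset.range (n+2), (((n:ℝ)+1)*((n:ℝ)+2) - (k:ℝ)*((k:ℝ)+1)) * (ccp a b k * ddp s (n+1-k)) := by
    rw [Rr, ← hs, Finset.mul_sum, ← Finset.sum_add_distrib]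
    exact Finset.sum_congr rfl (fun k _ => by ring)
  rw [expand2]
  have first : (∑ k ∈ Finset.range (n+2), (k:ℝ)*((k:ℝ)+1) * (ccp a b k * ddp s (n+1-k)))
      = ∑ k ∈ Finset.range (n+1), ((k:ℝ)+a)*((k:ℝ)+b) * (ccp a b k * ddp s (n-k)) := by
    rw [Finset.sum_range_succ' (fun k => (k:ℝ)*((k:ℝ)+1) * (ccp a b k * ddp s (n+1-k))) (n+1)]
    simp only [Nat.cast_zero, zero_mul, mul_zero, add_zero]
    have : ∀ k ∈ Finset.range (n+1),
        ((k+1:ℕ):ℝ)*(((k+1:ℕ):ℝ)+1) * (ccp a b (k+1) * ddp s (n+1-(k+1)))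
        = ((k:ℝ)+a)*((k:ℝ)+b) * (ccp a b k * ddp s (n-k)) := by
      intro k _
      have hsub : n + 1 - (k+1) = n - k := by omega
      have hc := ccp_rec a b k
      push_cast [hsub]
      calc ((k:ℝ)+1)*(((k:ℝ)+1)+1) * (ccp a b (k+1) * ddp s (n-k))
          = (((k:ℝ)+1)*((k:ℝ)+2) * ccp a b (k+1)) * ddp s (n-k) := by ring
        _ = (((k:ℝ)+a)*((k:ℝ)+b) * ccp a b k) * ddp s (n-k) := by rw [hc]
        _ = ((k:ℝ)+a)*((k:ℝ)+b) * (ccp a b k * ddp s (n-k)) := by ring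
    exact Finset.sum_congr rfl this
  have second : (∑ k ∈ Finset.range (n+2), (((n:ℝ)+1)*((n:ℝ)+2) - (k:ℝ)*((k:ℝ)+1)) * (ccp a b k * ddp s (n+1-k)))
      = ∑ k ∈ Finset.range (n+1), (((n:ℝ)+2-a)*((n:ℝ)+2-b) - ((k:ℝ)+a)*((k:ℝ)+b)) * (ccp a b k * ddp s (n-k)) := by
    rw [Finset.sum_range_succ]
    have hzero : (((n:ℝ)+1)*((n:ℝ)+2) - ((n+1:ℕ):ℝ)*(((n+1:ℕ):ℝ)+1)) = 0 := by push_cast; ring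
    rw [hzero, zero_mul, add_zero]
    exact Finset.sum_congr rfl key
  rw [first, second, Rr, ← hs, Finset.mul_sum, ← Finset.sum_add_distrib]
  exact Finset.sum_congr rfl (fun k _ => by ring)

lemma conv_eq (a b : ℝ) (n : ℕ) : ccp (2-a) (2-b) n = Rr a b n := by
  induction n with
  | zero => simp [Rr, ccp_zero, ddp_zero]
  | succ n ih =>
    have h1 := ccp_rec (2-a) (2-b) n
    have h2 := Rr_rec a b n
    have hne : ((n:ℝ)+1) * ((n:ℝ)+2) ≠ 0 := by positivity
    apply mul_left_cancel₀ hne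
    rw [h1, h2, ih]
    ring

lemma summable_abs_of_ratio_tendsto {f : ℕ → ℝ} {ρ : ℕ → ℝ} {L : ℝ} (hL : L < 1)
    (hρ : Tendsto ρ atTop (𝓝 L))
    (hf : ∀ᶠ n in atTop, |f (n+1)| ≤ ρ n * |f n|) : Summable (fun n => |f n|) := by
  have hr : L < (L+1)/2 := by linarith
  have hr1 : (L+1)/2 < 1 := by linarith
  apply summable_of_ratio_norm_eventually_le hr1
  filter_upwards [hf, hρ.eventually_lt_const hr] with n h1 h2
  simp only [Real.norm_eq_abs, abs_abs]
  calc |f (n+1)| ≤ ρ n * |f n| := h1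
    _ ≤ (L+1)/2 * |f n| := mul_le_mul_of_nonneg_right h2.le (abs_nonneg _)

lemma tendsto_shift (x c : ℝ) :
    Tendsto (fun n : ℕ => ((n:ℝ) + x) / ((n:ℝ) + c)) atTop (𝓝 1) := by
  have h0 : Tendsto (fun n : ℕ => (x - c) / ((n:ℝ) + c)) atTop (𝓝 0) :=
    Tendsto.div_atTop tendsto_const_nhds
      (tendsto_atTop_add_const_right atTop c tendsto_natCast_atTop_atTop)
  have h : ∀ᶠ n : ℕ in atTop, ((n:ℝ) + x) / ((n:ℝ) + c) = 1 + (x - c) / ((n:ℝ) + c) := by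
    filter_upwards [eventually_gt_atTop (Nat.ceil |c|)] with n hn
    have hc : (n:ℝ) + c ≠ 0 := by
      have h1 : |c| ≤ (Nat.ceil |c| : ℝ) := Nat.le_ceil _
      have h2 : (Nat.ceil |c| : ℝ) < (n:ℝ) := by exact_mod_cast hn
      have h3 := abs_le.1 h1
      nlinarith [h3.1, h3.2]
    field_simp
    ring
  rw [tendsto_congr' h]
  simpa using tendsto_const_nhds.add h0

-- summability of ∑ ddp s j * w^j and friends
lemma summable_abs_ddp_mul {s w : ℝ} (hw : |w| < 1) :
    Summable (fun j => |ddp s j * w^j|) := by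
  apply summable_abs_of_ratio_tendsto (f := fun j => ddp s j * w^j)
    (ρ := fun j => |((j:ℝ) - s) / ((j:ℝ) + 1)| * |w|) hw
  · have := (tendsto_shift (-s) 1).abs
    simpa [sub_eq_add_neg] using this.mul_const |w|
  · filter_upwards with j
    have hne : ((j:ℝ) + 1) ≠ 0 := by positivity
    have h := ddp_rec s j
    have hd : ddp s (j+1) = ((j:ℝ) - s) / ((j:ℝ) + 1) * ddp s j := by
      field_simp
      linarith [h]
    rw [hd, pow_succ]
    apply le_of_eq
    rw [abs_mul, abs_mul, abs_mul, abs_mul]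
    ring

lemma summable_abs_jddp {s x : ℝ} (hx : |x| < 1) :
    Summable (fun j : ℕ => |(j:ℝ) * ddp s j * x^j|) := by
  apply summable_abs_of_ratio_tendsto (f := fun (j:ℕ) => (j:ℝ) * ddp s j * x^j)
    (ρ := fun j : ℕ => |((j:ℝ) - s) / ((j:ℝ) + 0)| * |x|) hx
  · have := (tendsto_shift (-s) 0).abs
    simpa [sub_eq_add_neg] using this.mul_const |x|
  · filter_upwards [eventually_ge_atTop 1] with j hj
    have hj0 : ((j:ℝ)) ≠ 0 := by positivity
    have h := ddp_rec s j
    push_cast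
    have key : ((j:ℝ)+1) * ddp s (j+1) * x^(j+1) = (((j:ℝ) - s)/((j:ℝ)+0)) * x * ((j:ℝ) * ddp s j * x^j) := by
      rw [pow_succ]
      field_simp
      linear_combination (x^j * x * (j:ℝ)) * h
    apply le_of_eq
    rw [key, abs_mul, abs_mul]

lemma binomial_tsum (s : ℝ) {w : ℝ} (hw0 : 0 ≤ w) (hw1 : w < 1) :
    ∑' j : ℕ, ddp s j * w^j = (1-w) ^ s := by
  set r : ℝ := (w+1)/2 with hrdef
  have hwr : w < r := by rw [hrdef]; linarith
  have hr1 : r < 1 := by rw [hrdef]; linarith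
  have hr0 : 0 < r := by rw [hrdef]; linarith
  set G : ℝ → ℝ := fun z => ∑' j : ℕ, ddp s j * z^j with hG
  set D : ℝ → ℝ := fun z => ∑' j : ℕ, ddp s j * ((j:ℝ) * z^(j-1)) with hD
  -- bound sequence
  set u : ℕ → ℝ := fun j => |(j:ℝ) * ddp s j * r^j| * (1/r) with hu
  have hu_sum : Summable u := (summable_abs_jddp (s := s) (by rwa [abs_of_pos hr0])).mul_right (1/r)
  have hbound : ∀ (j : ℕ) (y : ℝ), y ∈ Set.Ioo (-r) r → ‖ddp s j * ((j:ℝ) * y^(j-1))‖ ≤ u j := by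
    intro j y hy
    have hyr : |y| ≤ r := by
      rw [abs_le]; exact ⟨hy.1.le, hy.2.le⟩
    show _ ≤ |(j:ℝ) * ddp s j * r^j| * (1/r)
    rcases Nat.eq_zero_or_pos j with hj | hj
    · simp [hj]
    · have hj1 : j - 1 + 1 = j := Nat.succ_pred_eq_of_pos hj
      have h1 : ‖ddp s j * ((j:ℝ) * y^(j-1))‖ = (j:ℝ) * |ddp s j| * |y|^(j-1) := by
        rw [Real.norm_eq_abs, abs_mul, abs_mul, abs_pow, Nat.abs_cast]; ring
      have h2 : |(j:ℝ) * ddp s j * r^j| * (1/r) = (j:ℝ) * |ddp s j| * r^(j-1) := by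
        rw [abs_mul, abs_mul, abs_pow, Nat.abs_cast, abs_of_pos hr0]
        rw [← hj1, pow_succ]
        field_simp
        rw [Nat.add_sub_cancel]
      rw [h1]
      rw [show |(j:ℝ) * ddp s j * r^j| * (1/r) = (j:ℝ) * |ddp s j| * r^(j-1) from h2]
      have : |y|^(j-1) ≤ r^(j-1) := pow_le_pow_left₀ (abs_nonneg y) hyr _
      have hnn : (0:ℝ) ≤ (j:ℝ) * |ddp s j| := by positivity
      nlinarith [abs_nonneg (ddp s j)]
  have hopen : IsOpen (Set.Ioo (-r) r) := isOpen_Ioo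
  have hconn : IsPreconnected (Set.Ioo (-r) r) := (convex_Ioo _ _).isPreconnected
  have h0mem : (0:ℝ) ∈ Set.Ioo (-r) r := ⟨by linarith, hr0⟩
  have hsum0 : Summable (fun j : ℕ => ddp s j * (0:ℝ)^j) := by
    apply summable_of_ne_finset_zero (s := {0})
    intro j hj
    simp only [Finset.mem_singleton] at hj
    rw [zero_pow hj, mul_zero]
  have hderivG : ∀ y ∈ Set.Ioo (-r) r, HasDerivAt G (D y) y := by
    intro y hy
    exact hasDerivAt_tsum_of_isPreconnected hu_sum hopen hconn
      (fun j z _ => (hasDerivAt_pow j z).const_mul (ddp s j))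
      hbound h0mem hsum0 hy
  -- the ODE identity
  have hODE : ∀ y ∈ Set.Ioo (-r) r, (1-y) * D y + s * G y = 0 := by
    intro y hy
    have hyabs : |y| < 1 := by
      rw [abs_lt]; constructor <;> [linarith [hy.1]; linarith [hy.2]]
    have hDsum : Summable (fun j : ℕ => ddp s j * ((j:ℝ) * y^(j-1))) :=
      Summable.of_norm_bounded hu_sum (fun j => hbound j y hy)
    have hT1 : Summable (fun j : ℕ => (j:ℝ) * ddp s j * y^j) :=
      (summable_abs_jddp (s := s) hyabs).of_abs
    have hGsum : Summable (fun j : ℕ => ddp s j * y^j) :=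
      (summable_abs_ddp_mul (s := s) hyabs).of_abs
    have step1 : D y = ∑' j : ℕ, ddp s (j+1) * (((j:ℕ)+1:ℝ) * y^j) := by
      simp only [hD]
      rw [Summable.tsum_eq_zero_add hDsum]
      simp
    have step2 : ∀ j : ℕ, ddp s (j+1) * (((j:ℕ)+1:ℝ) * y^j)
        = (j:ℝ) * ddp s j * y^j - s * (ddp s j * y^j) := by
      intro j
      have h := ddp_rec s j
      calc ddp s (j+1) * (((j:ℕ)+1:ℝ) * y^j) = (((j:ℝ)+1) * ddp s (j+1)) * y^j := by ring
        _ = (((j:ℝ) - s) * ddp s j) * y^j := by rw [h]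
        _ = (j:ℝ) * ddp s j * y^j - s * (ddp s j * y^j) := by ring
    have step3 : D y = (∑' j : ℕ, (j:ℝ) * ddp s j * y^j) - s * G y := by
      rw [step1, tsum_congr step2, Summable.tsum_sub hT1 ((hGsum).mul_left s)]
      rw [tsum_mul_left, hG]
    have step4 : y * D y = ∑' j : ℕ, (j:ℝ) * ddp s j * y^j := by
      simp only [hD]
      rw [← tsum_mul_left]
      apply tsum_congr
      intro j
      rcases Nat.eq_zero_or_pos j with hj | hj
      · simp [hj]
      · have hj1 : j - 1 + 1 = j := Nat.succ_pred_eq_of_pos hj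
        calc y * (ddp s j * ((j:ℝ) * y^(j-1))) = (j:ℝ) * ddp s j * (y^(j-1) * y) := by ring
          _ = (j:ℝ) * ddp s j * y^j := by rw [← pow_succ, hj1]
    have heq : D y = y * D y - s * G y := by
      nth_rewrite 1 [step3]
      rw [step4]
    linear_combination heq
  -- φ is constant
  set φ : ℝ → ℝ := fun z => G z * (1-z) ^ (-s) with hφ
  have hφderiv : ∀ y ∈ Set.Ioo (-r) r, HasDerivAt φ 0 y := by
    intro y hy
    have hy1 : (0:ℝ) < 1 - y := by linarith [hy.2]
    have h1 : HasDerivAt (fun z : ℝ => 1 - z) (-1) y := (hasDerivAt_id y).const_sub 1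
    have h2 : HasDerivAt (fun z : ℝ => (1-z) ^ (-s)) ((-1) * (-s) * (1-y) ^ (-s-1)) y :=
      h1.rpow_const (Or.inl (ne_of_gt hy1))
    have h3 := (hderivG y hy).mul h2
    have hval : D y * (1-y) ^ (-s) + G y * ((-1) * (-s) * (1-y) ^ (-s-1)) = 0 := by
      have hexp : (1-y) ^ (-s) = (1-y) ^ (-s-1) * (1-y) := by
        nth_rewrite 3 [show (1-y) = (1-y) ^ (1:ℝ) from (Real.rpow_one _).symm]
        rw [← Real.rpow_add hy1]
        norm_num
      rw [hexp]
      have := hODE y hy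
      nlinarith [this, Real.rpow_pos_of_pos hy1 (-s-1)]
    rw [hφ]
    rw [← hval]
    exact h3
  have hsubset : Set.Icc (0:ℝ) w ⊆ Set.Ioo (-r) r := by
    intro x hx
    exact ⟨by linarith [hx.1], by linarith [hx.2]⟩
  have hconst : φ w = φ 0 := by
    have hcont : ContinuousOn φ (Set.Icc 0 w) := fun x hx =>
      ((hφderiv x (hsubset hx)).continuousAt).continuousWithinAt
    have hd : ∀ x ∈ Set.Ico (0:ℝ) w, HasDerivWithinAt φ 0 (Set.Ici x) x := fun x hx =>
      (hφderiv x (hsubset ⟨hx.1, hx.2.le⟩)).hasDerivWithinAt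
    exact constant_of_has_deriv_right_zero hcont hd w ⟨hw0, le_refl w⟩
  have hG0 : G 0 = 1 := by
    simp only [hG]
    rw [tsum_eq_single 0 (fun j hj => by simp [zero_pow hj])]
    simp [ddp_zero]
  have hφ0 : φ 0 = 1 := by
    simp only [hφ]; simp [hG0]
  have hw1' : (0:ℝ) < 1 - w := by linarith
  have hφw : φ w = G w * (1-w) ^ (-s) := by simp only [hφ]
  have : G w * (1-w) ^ (-s) = 1 := by rw [← hφw, hconst, hφ0]
  have hcancel : (1-w) ^ (-s) * (1-w) ^ s = 1 := by
    rw [← Real.rpow_add hw1']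
    simp
  calc ∑' j : ℕ, ddp s j * w^j = G w := rfl
    _ = G w * ((1-w) ^ (-s) * (1-w) ^ s) := by rw [hcancel, mul_one]
    _ = (G w * (1-w) ^ (-s)) * (1-w) ^ s := by ring
    _ = (1-w) ^ s := by rw [this, one_mul]


lemma summable_abs_ccp_mul {a b w : ℝ} (hw : |w| < 1) :
    Summable (fun k => |ccp a b k * w^k|) := by
  apply summable_abs_of_ratio_tendsto (f := fun k => ccp a b k * w^k)
    (ρ := fun k => |((k:ℝ)+a) / ((k:ℝ)+1)| * |((k:ℝ)+b) / ((k:ℝ)+2)| * |w|) hw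
  · have h1 := ((tendsto_shift a 1).abs.mul (tendsto_shift b 2).abs).mul_const |w|
    simpa using h1
  · filter_upwards with k
    have hne1 : ((k:ℝ) + 1) ≠ 0 := by positivity
    have hne2 : ((k:ℝ) + 2) ≠ 0 := by positivity
    have h := ccp_rec a b k
    have hc : ccp a b (k+1) = (((k:ℝ)+a) / ((k:ℝ)+1)) * ((((k:ℝ)+b)) / ((k:ℝ)+2)) * ccp a b k := by
      field_simp
      linear_combination h
    apply le_of_eq
    push_cast
    rw [hc, pow_succ]
    rw [abs_mul, abs_mul, abs_mul, abs_mul, abs_mul]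
    ring

lemma S2gauss_eq (α β w : ℝ) : S2gauss α β w = ∑' k : ℕ, ccp α β k * w^k := by
  simp only [S2gauss, ccp]
  exact tsum_congr fun k => by ring

lemma euler_transform (a b t : ℝ) (ht0 : 0 < t) (ht1 : t < 1) :
    S2gauss (2-a) (2-b) (1-t) = t ^ (a+b-2) * S2gauss a b (1-t) := by
  set w : ℝ := 1 - t with hwdef
  have hw0 : 0 < w := by rw [hwdef]; linarith
  have hw1 : w < 1 := by rw [hwdef]; linarith
  have hwabs : |w| < 1 := by rw [abs_of_pos hw0]; exact hw1
  have hcc : Summable (fun k : ℕ => ‖ccp a b k * w^k‖) := by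
    simpa only [Real.norm_eq_abs] using summable_abs_ccp_mul (a := a) (b := b) hwabs
  have hdd : Summable (fun j : ℕ => ‖ddp (a+b-2) j * w^j‖) := by
    simpa only [Real.norm_eq_abs] using summable_abs_ddp_mul (s := a+b-2) (w := w) hwabs
  have cauchy := tsum_mul_tsum_eq_tsum_sum_range_of_summable_norm hcc hdd
  have key : ∀ n : ℕ, ccp (2-a) (2-b) n * w^n
      = ∑ k ∈ Finset.range (n+1), (ccp a b k * w^k) * (ddp (a+b-2) (n-k) * w^(n-k)) := by
    intro n
    rw [conv_eq, Rr, Finset.sum_mul]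
    apply Finset.sum_congr rfl
    intro k hk
    rw [Finset.mem_range] at hk
    have hk' : k ≤ n := Nat.lt_succ_iff.1 hk
    have : w^k * w^(n-k) = w^n := by
      rw [← pow_add, Nat.add_sub_cancel' hk']
    calc ccp a b k * ddp (a+b-2) (n-k) * w^n
        = ccp a b k * ddp (a+b-2) (n-k) * (w^k * w^(n-k)) := by rw [this]
      _ = (ccp a b k * w^k) * (ddp (a+b-2) (n-k) * w^(n-k)) := by ring
  calc S2gauss (2-a) (2-b) (1-t)
      = ∑' n : ℕ, ccp (2-a) (2-b) n * w^n := by rw [S2gauss_eq]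
    _ = ∑' n : ℕ, ∑ k ∈ Finset.range (n+1), (ccp a b k * w^k) * (ddp (a+b-2) (n-k) * w^(n-k)) :=
        tsum_congr key
    _ = (∑' k : ℕ, ccp a b k * w^k) * (∑' j : ℕ, ddp (a+b-2) j * w^j) := cauchy.symm
    _ = S2gauss a b (1-t) * (1-w) ^ (a+b-2) := by
        rw [binomial_tsum (a+b-2) hw0.le hw1, S2gauss_eq]
    _ = t ^ (a+b-2) * S2gauss a b (1-t) := by
        rw [show (1 - w) = t by rw [hwdef]; ring, mul_comm]


/-- `g_{t,c}` is an even function of `y`. -/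
theorem gPol_even (t c : ℝ) (ht : 0 < t) (ht1 : t < 1) (y : ℝ) :
    gPol t c (-y) = gPol t c y := by
  have h1 : S2gauss (-y + 1) (-y + 2*c + 1) (1 - t)
      = t ^ (2*(y-c)) * S2gauss (y+1) (y-2*c+1) (1-t) := by
    have h := euler_transform (y+1) (y-2*c+1) t ht ht1
    rw [show (2 - (y+1)) = -y + 1 by ring, show (2 - (y-2*c+1)) = -y + 2*c + 1 by ring,
      show (y+1) + (y-2*c+1) - 2 = 2*(y-c) by ring] at h
    exact h
  have h2 : S2gauss (-y + 1) (-y - 2*c + 1) (1 - t)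
      = t ^ (2*(y+c)) * S2gauss (y+1) (y+2*c+1) (1-t) := by
    have h := euler_transform (y+1) (y+2*c+1) t ht ht1
    rw [show (2 - (y+1)) = -y + 1 by ring, show (2 - (y+2*c+1)) = -y - 2*c + 1 by ring,
      show (y+1) + (y+2*c+1) - 2 = 2*(y+c) by ring] at h
    exact h
  have h3 : S2gauss (-y + 1) (-y + 1) (1 - t)
      = t ^ (2*y) * S2gauss (y+1) (y+1) (1-t) := by
    have h := euler_transform (y+1) (y+1) t ht ht1
    rw [show (2 - (y+1)) = -y + 1 by ring, show (y+1) + (y+1) - 2 = 2*y by ring] at h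
    exact h
  have p1 : t ^ (-y + c) * t ^ (2*(y-c)) = t ^ (y - c) := by
    rw [← Real.rpow_add ht]; congr 1; ring
  have p2 : t ^ (-y - c) * t ^ (2*(y+c)) = t ^ (y + c) := by
    rw [← Real.rpow_add ht]; congr 1; ring
  have p3 : t ^ (-y : ℝ) * t ^ (2*y) = t ^ y := by
    rw [← Real.rpow_add ht]; congr 1; ring
  simp only [gPol]
  rw [h1, h2, h3]
  linear_combination (y*(y-2*c)*S2gauss (y+1) (y-2*c+1) (1-t)) * p1
    + (y*(y+2*c)*S2gauss (y+1) (y+2*c+1) (1-t)) * p2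
    - (2*y^2*S2gauss (y+1) (y+1) (1-t)) * p3
end
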